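/- Let β ∈ ℂ with |β| < 1 and z in the open unit disc 𝔻. The operator I − z Û_β* on L²(μ) is invertible; set x = (I − z Û_β*)⁻¹ ξ̄. Then Kμ(z) − z·conj(β)·K(ξ̄μ)(z) ≠ 0 and ⟨x, 1⟩ = K(ξ̄μ)(z) / (Kμ(z) − z·conj(β)·K(ξ̄μ)(z)). -/

import Mathlib

open MeasureTheory Filter ContinuousLinearMap
open scoped ENNReal Topology ComplexConjugate

noncomputable section

/-- The Cauchy transform `K(fτ)(z) = ∫ f(ξ)/(1 - conj(ξ) z) dτ(ξ)` of the measure `fτ`. -/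
def cauchyT (τ : Measure ℂ) (f : ℂ → ℂ) (z : ℂ) : ℂ :=
  ∫ ξ, f ξ / (1 - conj ξ * z) ∂τ

/-- The function `ξ ↦ conj ξ`. -/
def xibarFun : ℂ → ℂ := fun ξ => conj ξ

/-- The constant function `1`. -/
def oneFun : ℂ → ℂ := fun _ => 1

/-- The operator `Û_γ = M_ξ + (γ - 1)⟨·, ξ̄⟩1` on `L²(μ)`, where `Mxi` is multiplication by
the independent variable, `xibar` is the function `ξ ↦ conj ξ` and `one` is the constant
function `1`.  (Here `⟨f, ξ̄⟩ = ∫ f(ξ) ξ dμ(ξ)` is linear in `f`.) -/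
def clarkOp (μ : Measure ℂ) (Mxi : Lp ℂ 2 μ →L[ℂ] Lp ℂ 2 μ) (xibar one : Lp ℂ 2 μ)
    (γ : ℂ) : Lp ℂ 2 μ →L[ℂ] Lp ℂ 2 μ :=
  Mxi + (γ - 1) • ((innerSL ℂ xibar).smulRight one)

/-- The scalar characteristic function
`θ(z) = ⟨(-U + z D₊ (I - z U*)⁻¹ D) ξ̄, 1⟩` of a contraction `U` on `L²(μ)` with defect
operators `Dm = (I - U*U)^{1/2}` and `Ds = (I - U U*)^{1/2}`. -/
def charF {μ : Measure ℂ} (U Dm Ds : Lp ℂ 2 μ →L[ℂ] Lp ℂ 2 μ) (xibar one : Lp ℂ 2 μ)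
    (z : ℂ) : ℂ :=
  inner ℂ one ((-U + z • (Ds ∘L Ring.inverse (1 - z • ContinuousLinearMap.adjoint U) ∘L Dm))
    xibar)

/-- `T^{(k)}`: nonnegative powers of `T`; powers of the adjoint for negative `k`. -/
def zpowOp {E : Type*} [NormedAddCommGroup E] [InnerProductSpace ℂ E] [CompleteSpace E]
    (T : E →L[ℂ] E) (k : ℤ) : E →L[ℂ] E :=
  if 0 ≤ k then T ^ k.toNat else (ContinuousLinearMap.adjoint T) ^ (-k).toNat

/-- Normalized Lebesgue (arclength) measure on the unit circle `𝕋`, as a measure on `ℂ`. -/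
def mCircle : Measure ℂ :=
  (ENNReal.ofReal (2 * Real.pi))⁻¹ •
    (volume.restrict (Set.Ioc (0:ℝ) (2 * Real.pi))).map (circleMap 0 1)

/-- A function on the disc is *inner* if its radial limits exist and have modulus one at
`m`-almost every point of the unit circle. -/
def IsInnerFun (f : ℂ → ℂ) : Prop :=
  ∀ᵐ ξ ∂mCircle, ∃ L : ℂ,
    Tendsto (fun r : ℝ => f ((r : ℂ) * ξ)) (𝓝[<] (1:ℝ)) (𝓝 L) ∧ ‖L‖ = 1

private lemma aux_sherman {E : Type*} [NormedAddCommGroup E] [InnerProductSpace ℂ E]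
    (A B : E →L[ℂ] E) (hAB : A * B = 1) (hBA : B * A = 1)
    (u x v : E) (c D : ℂ) (hAv : A v = x) (hD : D = 1 - c * (inner ℂ u v : ℂ)) (hDne : D ≠ 0) :
    ((A - c • ((innerSL ℂ u).smulRight x)) * ((1 + (c / D) • ((innerSL ℂ u).smulRight v)) * B) = 1)
    ∧ (((1 + (c / D) • ((innerSL ℂ u).smulRight v)) * B) * (A - c • ((innerSL ℂ u).smulRight x)) = 1)
    ∧ ((1 + (c / D) • ((innerSL ℂ u).smulRight v)) * B) x = D⁻¹ • v := by
  have hABf : ∀ f, A (B f) = f := fun f => by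
    rw [← ContinuousLinearMap.mul_apply, hAB, ContinuousLinearMap.one_apply]
  have hBAf : ∀ f, B (A f) = f := fun f => by
    rw [← ContinuousLinearMap.mul_apply, hBA, ContinuousLinearMap.one_apply]
  have hBx : B x = v := by rw [← hAv, hBAf]
  have hDinv : D * D⁻¹ = 1 := mul_inv_cancel₀ hDne
  refine ⟨?_, ?_, ?_⟩
  · ext f
    simp only [ContinuousLinearMap.mul_apply, ContinuousLinearMap.sub_apply,
      ContinuousLinearMap.add_apply, ContinuousLinearMap.smul_apply, ContinuousLinearMap.one_apply,
      ContinuousLinearMap.smulRight_apply, innerSL_apply_apply, map_add, _root_.map_smul,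
      inner_add_right, inner_smul_right, hAv, hABf]
    match_scalars
    simp only [div_eq_mul_inv]
    linear_combination (-(c * (inner ℂ u (B f) : ℂ) * D⁻¹)) * hD
      + (c * (inner ℂ u (B f) : ℂ)) * hDinv
  · ext f
    simp only [ContinuousLinearMap.mul_apply, ContinuousLinearMap.sub_apply,
      ContinuousLinearMap.add_apply, ContinuousLinearMap.smul_apply, ContinuousLinearMap.one_apply,
      ContinuousLinearMap.smulRight_apply, innerSL_apply_apply, map_sub, _root_.map_smul,
      inner_sub_right, inner_smul_right, hAv, hBAf, hBx]
    match_scalars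
    simp only [div_eq_mul_inv]
    linear_combination (-(c * (inner ℂ u f : ℂ) * D⁻¹)) * hD
      + (c * (inner ℂ u f : ℂ)) * hDinv
  · simp only [ContinuousLinearMap.mul_apply, ContinuousLinearMap.add_apply,
      ContinuousLinearMap.smul_apply, ContinuousLinearMap.one_apply,
      ContinuousLinearMap.smulRight_apply, innerSL_apply_apply, hBx]
    match_scalars
    simp only [div_eq_mul_inv]
    linear_combination D⁻¹ * hD - hDinv


set_option maxHeartbeats 1000000 in
theorem statement16
    (μ : Measure ℂ) [IsProbabilityMeasure μ] (hμ : μ (Metric.sphere (0:ℂ) 1)ᶜ = 0)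
    (Mxi : Lp ℂ 2 μ →L[ℂ] Lp ℂ 2 μ)
    (hMxi : ∀ f : Lp ℂ 2 μ, ∀ᵐ ξ ∂μ, (Mxi f) ξ = ξ * f ξ)
    (one xibar : Lp ℂ 2 μ)
    (hone : ∀ᵐ ξ ∂μ, one ξ = 1) (hxibar : ∀ᵐ ξ ∂μ, xibar ξ = conj ξ)
    (β : ℂ) (hβ : ‖β‖ < 1)
    (z : ℂ) (hz : ‖z‖ < 1) :
    IsUnit ((1 : Lp ℂ 2 μ →L[ℂ] Lp ℂ 2 μ) -
        z • ContinuousLinearMap.adjoint (clarkOp μ Mxi xibar one β)) ∧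
    cauchyT μ oneFun z - z * conj β * cauchyT μ xibarFun z ≠ 0 ∧
    (inner ℂ one (Ring.inverse ((1 : Lp ℂ 2 μ →L[ℂ] Lp ℂ 2 μ) -
        z • ContinuousLinearMap.adjoint (clarkOp μ Mxi xibar one β)) xibar) : ℂ) =
      cauchyT μ xibarFun z /
        (cauchyT μ oneFun z - z * conj β * cauchyT μ xibarFun z) := by
  classical
  have hz' : ‖z‖ < 1 := by exact hz
  -- a.e. every point has norm 1
  have hone1 : ∀ᵐ ξ ∂μ, ‖ξ‖ = 1 := by
    rw [ae_iff]
    have : {ξ : ℂ | ¬ ‖ξ‖ = 1} = (Metric.sphere (0:ℂ) 1)ᶜ := by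
      ext ξ; simp [mem_sphere_zero_iff_norm]
    rw [this]; exact hμ
  set d : ℝ := 1 - ‖z‖ with hd_def
  have hd : 0 < d := by rw [hd_def]; linarith
  have hden : ∀ ξ : ℂ, ‖ξ‖ = 1 → d ≤ ‖1 - conj ξ * z‖ := by
    intro ξ hξ
    have h1 : ‖conj ξ * z‖ = ‖z‖ := by rw [norm_mul, RCLike.norm_conj, hξ, one_mul]
    calc d = ‖(1:ℂ)‖ - ‖conj ξ * z‖ := by rw [norm_one, h1]
    _ ≤ ‖1 - conj ξ * z‖ := norm_sub_norm_le _ _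
  have hne : ∀ ξ : ℂ, ‖ξ‖ = 1 → 1 - conj ξ * z ≠ 0 := by
    intro ξ hξ h0
    have := hden ξ hξ
    rw [h0, norm_zero] at this; linarith
  -- the functions
  set f1 : ℂ → ℂ := fun ξ => (1 - conj ξ * z)⁻¹ with hf1_def
  set vf : ℂ → ℂ := fun ξ => conj ξ * (1 - conj ξ * z)⁻¹ with hvf_def
  set wf : ℂ → ℂ := fun ξ => conj ξ * vf ξ with hwf_def
  have hconj_meas : Measurable (fun ξ : ℂ => (conj ξ : ℂ)) := Complex.continuous_conj.measurable
  have hmeas_f1 : Measurable f1 := (measurable_const.sub (hconj_meas.mul_const z)).inv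
  have hmeas_v : Measurable vf := hconj_meas.mul hmeas_f1
  have hmeas_w : Measurable wf := hconj_meas.mul hmeas_v
  have hbound_f1 : ∀ᵐ ξ ∂μ, ‖f1 ξ‖ ≤ d⁻¹ := by
    filter_upwards [hone1] with ξ hξ
    rw [hf1_def]
    simp only [norm_inv]
    exact inv_anti₀ hd (hden ξ hξ)
  have hbound_v : ∀ᵐ ξ ∂μ, ‖vf ξ‖ ≤ d⁻¹ := by
    filter_upwards [hbound_f1, hone1] with ξ h1 hξ
    rw [hvf_def]
    simp only [norm_mul, RCLike.norm_conj, hξ, one_mul]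
    simpa [hf1_def] using h1
  have hbound_w : ∀ᵐ ξ ∂μ, ‖wf ξ‖ ≤ d⁻¹ := by
    filter_upwards [hbound_v, hone1] with ξ h1 hξ
    rw [hwf_def]
    simp only [norm_mul, RCLike.norm_conj, hξ, one_mul]
    exact h1
  have hmem_v : MemLp vf 2 μ := MemLp.of_bound hmeas_v.aestronglyMeasurable d⁻¹ hbound_v
  have hmem_w : MemLp wf 2 μ := MemLp.of_bound hmeas_w.aestronglyMeasurable d⁻¹ hbound_w
  set v : Lp ℂ 2 μ := hmem_v.toLp vf with hv_def
  set w : Lp ℂ 2 μ := hmem_w.toLp wf with hw_def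
  have hv : ⇑v =ᵐ[μ] vf := hmem_v.coeFn_toLp
  have hw : ⇑w =ᵐ[μ] wf := hmem_w.coeFn_toLp
  -- integrability
  have hint_f1 : Integrable f1 μ :=
    memLp_one_iff_integrable.mp (MemLp.of_bound hmeas_f1.aestronglyMeasurable d⁻¹ hbound_f1)
  have hint_v : Integrable vf μ :=
    memLp_one_iff_integrable.mp (MemLp.of_bound hmeas_v.aestronglyMeasurable d⁻¹ hbound_v)
  -- the scalar quantities
  have hKx_int : cauchyT μ xibarFun z = ∫ ξ, vf ξ ∂μ := by
    unfold cauchyT xibarFun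
    simp_rw [div_eq_mul_inv]
    rfl
  have hK1_int : cauchyT μ oneFun z = ∫ ξ, f1 ξ ∂μ := by
    unfold cauchyT oneFun
    simp_rw [one_div]
    rfl
  -- the relation K1 = 1 + z * Kx
  have hK1 : cauchyT μ oneFun z = 1 + z * cauchyT μ xibarFun z := by
    have h1 : cauchyT μ oneFun z - z * cauchyT μ xibarFun z
        = ∫ ξ, (f1 ξ - z * vf ξ) ∂μ := by
      rw [hK1_int, hKx_int, ← integral_const_mul, ← integral_sub hint_f1 (hint_v.const_mul z)]
    have h2 : ∫ ξ, (f1 ξ - z * vf ξ) ∂μ = 1 := by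
      rw [show (1:ℂ) = ∫ _ξ, (1:ℂ) ∂μ by simp]
      apply integral_congr_ae
      filter_upwards [hone1] with ξ hξ
      have hne' := hne ξ hξ
      rw [hf1_def, hvf_def]
      field_simp
    linear_combination h1 + h2
  -- lower bound for the real part of K1
  have hz2 : ‖z‖^2 < 1 := by nlinarith [norm_nonneg z]
  set δ : ℝ := (1 - ‖z‖^2)/(2*(1+‖z‖)^2) with hδ_def
  have hδ : (0:ℝ) < δ := by
    apply div_pos (by linarith) (by positivity)
  have hre_eq : ∀ w : ℂ, RCLike.re w = w.re := fun _ => rfl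
  have hRe_pt : ∀ᵐ ξ ∂μ, 1/2 + δ ≤ (f1 ξ).re := by
    filter_upwards [hone1] with ξ hξ
    set u : ℂ := 1 - conj ξ * z with hu
    have hu0 : u ≠ 0 := hne ξ hξ
    have hN_pos : 0 < Complex.normSq u := Complex.normSq_pos.mpr hu0
    have hwsq : Complex.normSq (conj ξ * z) = ‖z‖^2 := by
      rw [← Complex.sq_norm, norm_mul, RCLike.norm_conj, hξ, one_mul]
    have hN1 : Complex.normSq u = 1 + ‖z‖^2 - 2*(conj ξ * z).re := by
      rw [hu, Complex.normSq_sub, Complex.normSq_one, hwsq, one_mul, Complex.conj_re]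
    have hure : u.re = (1 - ‖z‖^2 + Complex.normSq u)/2 := by
      have h3 : u.re = 1 - (conj ξ * z).re := by
        rw [hu, Complex.sub_re, Complex.one_re]
      rw [h3]; linarith
    have hNle : Complex.normSq u ≤ (1+‖z‖)^2 := by
      rw [← Complex.sq_norm]
      have h4 : ‖u‖ ≤ 1 + ‖z‖ := by
        calc ‖u‖ ≤ ‖(1:ℂ)‖ + ‖conj ξ * z‖ := norm_sub_le _ _
        _ = 1 + ‖z‖ := by rw [norm_one, norm_mul, RCLike.norm_conj, hξ, one_mul]
      nlinarith [norm_nonneg u]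
    have hre : (f1 ξ).re = u.re / Complex.normSq u := by
      rw [show f1 ξ = u⁻¹ from rfl, Complex.inv_re]
    rw [hre, hure, le_div_iff₀ hN_pos]
    have hδle : δ * (2*(1+‖z‖)^2) = 1 - ‖z‖^2 := by
      rw [hδ_def]; field_simp
    have hmul : δ * Complex.normSq u ≤ δ * (1+‖z‖)^2 :=
      mul_le_mul_of_nonneg_left hNle hδ.le
    nlinarith [hmul, hδle]
  have hReK1 : 1/2 + δ ≤ (cauchyT μ oneFun z).re := by
    have h1 : ∫ ξ, (f1 ξ).re ∂μ = (∫ ξ, f1 ξ ∂μ).re := by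
      rw [← hre_eq]
      exact integral_re hint_f1
    have h2 : ∫ _ξ, ((1:ℝ)/2 + δ) ∂μ ≤ ∫ ξ, (f1 ξ).re ∂μ :=
      integral_mono_ae (integrable_const _) hint_f1.re hRe_pt
    have h3 : ∫ _ξ, ((1:ℝ)/2 + δ) ∂μ = 1/2 + δ := by simp
    rw [hK1_int]
    rw [h3, h1] at h2
    exact h2
  -- the denominator is nonzero
  have hDne : cauchyT μ oneFun z - z * conj β * cauchyT μ xibarFun z ≠ 0 := by
    intro h0
    set b : ℂ := conj β with hb_def
    have hb : ‖b‖ < 1 := by rw [hb_def, Complex.norm_conj]; exact hβ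
    have hb1 : b - 1 ≠ 0 := by
      intro h
      have : b = 1 := by linear_combination h
      rw [this] at hb
      simp at hb
    have h2 : cauchyT μ oneFun z * (b - 1) = b := by
      linear_combination b * hK1 - h0
    have hK1eq : cauchyT μ oneFun z = b / (b - 1) := by
      rw [eq_div_iff hb1]; exact h2
    have hN : 0 < Complex.normSq (b-1) := Complex.normSq_pos.mpr hb1
    have hNval : Complex.normSq (b - 1) = (b.re - 1)^2 + b.im^2 := by
      simp [Complex.normSq_apply, Complex.sub_re, Complex.sub_im]
      ring
    have hb2 : b.re^2 + b.im^2 < 1 := by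
      have h5 : Complex.normSq b < 1 := by
        rw [← Complex.sq_norm]
        nlinarith [norm_nonneg b]
      rw [Complex.normSq_apply] at h5
      nlinarith
    have hle : (cauchyT μ oneFun z).re ≤ 1/2 := by
      rw [hK1eq, Complex.div_re, ← add_div, div_le_iff₀ hN]
      simp only [Complex.sub_re, Complex.sub_im, Complex.one_re, Complex.one_im, sub_zero]
      rw [hNval]
      nlinarith
    linarith
  -- operator part
  have hMxi_norm : ∀ f : Lp ℂ 2 μ, ‖Mxi f‖ = ‖f‖ := by
    intro f
    rw [Lp.norm_def, Lp.norm_def]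
    congr 1
    calc eLpNorm (⇑(Mxi f)) 2 μ = eLpNorm (fun ξ => ξ * f ξ) 2 μ := eLpNorm_congr_ae (hMxi f)
    _ = eLpNorm (⇑f) 2 μ := eLpNorm_congr_norm_ae (by
        filter_upwards [hone1] with ξ hξ
        rw [norm_mul, hξ, one_mul])
  have hMxi_le : ‖Mxi‖ ≤ 1 := ContinuousLinearMap.opNorm_le_bound _ zero_le_one fun f => by
    rw [hMxi_norm f, one_mul]
  have hsm : ‖z • ContinuousLinearMap.adjoint Mxi‖ < 1 := by
    have hadj_norm : ‖ContinuousLinearMap.adjoint Mxi‖ = ‖Mxi‖ :=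
      LinearIsometryEquiv.norm_map ContinuousLinearMap.adjoint Mxi
    rw [norm_smul, hadj_norm]
    have h1 : ‖z‖ * ‖Mxi‖ ≤ ‖z‖ * 1 := mul_le_mul_of_nonneg_left hMxi_le (norm_nonneg z)
    have h2 : ‖z‖ * 1 < 1 := by rwa [mul_one]
    linarith
  set uA := Units.oneSub (z • ContinuousLinearMap.adjoint Mxi) hsm with huA_def
  set A : Lp ℂ 2 μ →L[ℂ] Lp ℂ 2 μ := 1 - z • ContinuousLinearMap.adjoint Mxi with hA_def
  set B : Lp ℂ 2 μ →L[ℂ] Lp ℂ 2 μ := ((uA⁻¹ : _ˣ) : Lp ℂ 2 μ →L[ℂ] Lp ℂ 2 μ) with hB_def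
  have hAval : (uA : Lp ℂ 2 μ →L[ℂ] Lp ℂ 2 μ) = A := rfl
  have hAB : A * B = 1 := by rw [← hAval, hB_def]; exact uA.mul_inv
  have hBA : B * A = 1 := by rw [← hAval, hB_def]; exact uA.inv_mul
  -- adjoint of the rank-one part
  have hadjP : ContinuousLinearMap.adjoint ((innerSL ℂ xibar).smulRight one)
      = (innerSL ℂ one).smulRight xibar := by
    refine ContinuousLinearMap.ext fun f => ?_
    apply ext_inner_left ℂ
    intro g
    rw [ContinuousLinearMap.adjoint_inner_right]
    simp only [ContinuousLinearMap.smulRight_apply, innerSL_apply_apply, inner_smul_left,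
      inner_smul_right, inner_conj_symm]
    ring
  have hadjC : ContinuousLinearMap.adjoint (clarkOp μ Mxi xibar one β)
      = ContinuousLinearMap.adjoint Mxi + (conj β - 1) • ((innerSL ℂ one).smulRight xibar) := by
    rw [clarkOp, map_add, LinearIsometryEquiv.map_smulₛₗ, hadjP]
    congr 1
    rw [map_sub, map_one]
  set cc : ℂ := z * (conj β - 1) with hcc_def
  set Q : Lp ℂ 2 μ →L[ℂ] Lp ℂ 2 μ := (innerSL ℂ one).smulRight xibar with hQ_def
  have hT : (1 : Lp ℂ 2 μ →L[ℂ] Lp ℂ 2 μ)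
        - z • ContinuousLinearMap.adjoint (clarkOp μ Mxi xibar one β) = A - cc • Q := by
    rw [hadjC, smul_add, smul_smul, sub_add_eq_sub_sub, hA_def, hcc_def]
  -- adjoint of Mxi applied to v
  have hadj_v : ContinuousLinearMap.adjoint Mxi v = w := by
    apply ext_inner_left ℂ
    intro g
    rw [ContinuousLinearMap.adjoint_inner_right]
    rw [MeasureTheory.L2.inner_def, MeasureTheory.L2.inner_def]
    apply integral_congr_ae
    filter_upwards [hMxi g, hv, hw] with ξ h1 h2 h3
    rw [RCLike.inner_apply', RCLike.inner_apply', h1, h2, h3]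
    rw [show wf ξ = conj ξ * vf ξ from rfl]
    simp only [map_mul]
    ring
  have hAv : A v = xibar := by
    have h1 : A v = v - z • w := by
      rw [hA_def]
      simp only [ContinuousLinearMap.sub_apply, ContinuousLinearMap.smul_apply,
        ContinuousLinearMap.one_apply, hadj_v]
    rw [h1]
    apply Lp.ext
    filter_upwards [Lp.coeFn_sub v (z • w), Lp.coeFn_smul z w, hv, hw, hxibar, hone1]
      with ξ e1 e2 e3 e4 e5 e6
    rw [e1]
    simp only [Pi.sub_apply]
    rw [e2]
    simp only [Pi.smul_apply, smul_eq_mul]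
    rw [e3, e4, e5]
    rw [show vf ξ = conj ξ * (1 - conj ξ * z)⁻¹ from rfl,
      show wf ξ = conj ξ * vf ξ from rfl,
      show vf ξ = conj ξ * (1 - conj ξ * z)⁻¹ from rfl]
    have hne' := hne ξ e6
    field_simp
  -- the inner product ⟨1, v⟩
  have hKxv : (inner ℂ one v : ℂ) = cauchyT μ xibarFun z := by
    rw [MeasureTheory.L2.inner_def, hKx_int]
    apply integral_congr_ae
    filter_upwards [hone, hv] with ξ h1 h2
    rw [RCLike.inner_apply', h1, h2, map_one, one_mul]
  have hDrel : cauchyT μ oneFun z - z * conj β * cauchyT μ xibarFun z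
      = 1 - cc * (inner ℂ one v : ℂ) := by
    rw [hKxv, hcc_def]
    linear_combination hK1
  obtain ⟨hTR, hRT, hRx⟩ := aux_sherman A B hAB hBA one xibar v cc
    (cauchyT μ oneFun z - z * conj β * cauchyT μ xibarFun z) hAv hDrel hDne
  refine ⟨?_, hDne, ?_⟩
  · rw [hT]
    exact ⟨⟨A - cc • Q, _, hTR, hRT⟩, rfl⟩
  · have hinv : Ring.inverse ((1 : Lp ℂ 2 μ →L[ℂ] Lp ℂ 2 μ)
        - z • ContinuousLinearMap.adjoint (clarkOp μ Mxi xibar one β))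
        = (1 + (cc / (cauchyT μ oneFun z - z * conj β * cauchyT μ xibarFun z))
            • ((innerSL ℂ one).smulRight v)) * B := by
      rw [hT]
      exact Ring.inverse_unit ⟨A - cc • Q, _, hTR, hRT⟩
    rw [hinv, hRx, inner_smul_right, hKxv, div_eq_inv_mul]

end
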